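/- Let x, y be positive integers and let w1, w2, w3 be positive integers. Then (x+y+w1+w3−1)!·(w1+w2−1)! + (x+y+w1+w2−1)!·(w1+w3−1)! > (x+w1+w3−1)!·(y+w1+w2−1)! + (x+w1+w2−1)!·(y+w1+w3−1)!. -/
import Mathlib

open Nat

lemma fac_shift (n p k : ℕ) (h : n ≤ p) :
    p.factorial * (n + k).factorial ≤ (p + k).factorial * n.factorial := by
  induction k with
  | zero => simp [mul_comm]
  | succ k ih =>
    calc p.factorial * (n + (k+1)).factorial
        = (n + k + 1) * (p.factorial * (n + k).factorial) := by
          rw [show n + (k+1) = (n+k)+1 from rfl, factorial_succ]; ring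
      _ ≤ (p + k + 1) * ((p+k).factorial * n.factorial) :=
          Nat.mul_le_mul (by omega) ih
      _ = (p + (k+1)).factorial * n.factorial := by
          rw [show p + (k+1) = (p+k)+1 from rfl, factorial_succ]; ring

lemma fac_pair (m n p q : ℕ) (hp : p ≤ m) (hq : q ≤ m) (hs : m + n = p + q) :
    p.factorial * q.factorial ≤ m.factorial * n.factorial := by
  have hn : n ≤ p := by omega
  have h := fac_shift n p (m - p) hn
  rw [show p + (m-p) = m by omega] at h
  rw [show q = n + (m - p) by omega]
  exact h

lemma core (a b x y : ℕ) (hba : b ≤ a) (hx : 0 < x) (hy : 0 < y) :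
    (x + a).factorial * (y + b).factorial + (x + b).factorial * (y + a).factorial <
      (x + y + a).factorial * b.factorial + (x + y + b).factorial * a.factorial := by
  obtain ⟨d, rfl⟩ : ∃ d, a = b + d := ⟨a - b, by omega⟩
  clear hba
  induction y, hy using Nat.le_induction with
  | base =>
    have hpair : (x + b).factorial * (b + d).factorial ≤
        (x + (b + d)).factorial * b.factorial :=
      fac_pair (x + (b + d)) b (x + b) (b + d) (by omega) (by omega) (by omega)
    have e1 : (x + 1 + (b + d)).factorial
        = (x + 1 + (b + d)) * (x + (b + d)).factorial := by
      rw [show x + 1 + (b + d) = (x + (b + d)) + 1 by omega, factorial_succ]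
    have e2 : (x + 1 + b).factorial = (x + 1 + b) * (x + b).factorial := by
      rw [show x + 1 + b = (x + b) + 1 by omega, factorial_succ]
    have e3 : (1 + b).factorial = (1 + b) * b.factorial := by
      rw [show 1 + b = b + 1 by omega, factorial_succ]
    have e4 : (1 + (b + d)).factorial = (1 + (b + d)) * (b + d).factorial := by
      rw [show 1 + (b + d) = (b + d) + 1 by omega, factorial_succ]
    have hA : 0 < (x + (b + d)).factorial * b.factorial := by positivity
    have hB : 0 < (x + b).factorial * (b + d).factorial := by positivity
    zify at hpair hA hB ⊢
    rcases le_or_gt d x with hc | hc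
    · nlinarith [hpair, hA, hB]
    · nlinarith [hpair, hA, hB]
  | succ y hy ih =>
    have hpair : (x + b).factorial * (y + (b + d)).factorial ≤
        (x + y + (b + d)).factorial * b.factorial :=
      fac_pair (x + y + (b + d)) b (x + b) (y + (b + d)) (by omega) (by omega) (by omega)
    have e5 : (x + (y+1) + (b + d)).factorial * b.factorial
        = (x + y + 1 + (b + d)) * ((x + y + (b + d)).factorial * b.factorial) := by
      rw [show x + (y+1) + (b + d) = (x + y + (b + d)) + 1 by omega, factorial_succ]; ring
    have e6 : (x + (y+1) + b).factorial * (b + d).factorial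
        = (x + y + 1 + b) * ((x + y + b).factorial * (b + d).factorial) := by
      rw [show x + (y+1) + b = (x + y + b) + 1 by omega, factorial_succ]; ring
    have e7 : (x + (b + d)).factorial * ((y+1) + b).factorial
        = (y + 1 + b) * ((x + (b + d)).factorial * (y + b).factorial) := by
      rw [show (y+1) + b = (y + b) + 1 by omega, factorial_succ]; ring
    have e8 : (x + b).factorial * ((y+1) + (b + d)).factorial
        = (y + 1 + (b + d)) * ((x + b).factorial * (y + (b + d)).factorial) := by
      rw [show (y+1) + (b + d) = (y + (b + d)) + 1 by omega, factorial_succ]; ring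
    rw [e5, e6, e7, e8]
    set T1 := (x + y + (b + d)).factorial * b.factorial with hT1
    set T2 := (x + y + b).factorial * (b + d).factorial with hT2
    set R1 := (x + (b + d)).factorial * (y + b).factorial with hR1
    set R2 := (x + b).factorial * (y + (b + d)).factorial with hR2
    have s1 : (y + 1 + b) * (R1 + R2) < (y + 1 + b) * (T1 + T2) :=
      Nat.mul_lt_mul_of_pos_left ih (by omega)
    have s2 : d * R2 ≤ d * T1 := Nat.mul_le_mul_left d hpair
    calc (y + 1 + b) * R1 + (y + 1 + (b + d)) * R2
        = (y + 1 + b) * (R1 + R2) + d * R2 := by ring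
      _ < (y + 1 + b) * (T1 + T2) + d * T1 := Nat.add_lt_add_of_lt_of_le s1 s2
      _ = (y + 1 + (b + d)) * T1 + (y + 1 + b) * T2 := by ring
      _ ≤ (x + y + 1 + (b + d)) * T1 + (x + y + 1 + b) * T2 :=
          Nat.add_le_add (Nat.mul_le_mul_right T1 (by omega))
            (Nat.mul_le_mul_right T2 (by omega))

theorem factorial_cycle_weight_inequality (x y w1 w2 w3 : ℕ)
    (hx : 0 < x) (hy : 0 < y) (h1 : 0 < w1) (h2 : 0 < w2) (h3 : 0 < w3) :
    (x + y + w1 + w3 - 1).factorial * (w1 + w2 - 1).factorial +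
        (x + y + w1 + w2 - 1).factorial * (w1 + w3 - 1).factorial >
      (x + w1 + w3 - 1).factorial * (y + w1 + w2 - 1).factorial +
        (x + w1 + w2 - 1).factorial * (y + w1 + w3 - 1).factorial := by
  set a := w1 + w3 - 1 with ha
  set b := w1 + w2 - 1 with hb
  rw [show x + y + w1 + w3 - 1 = x + y + a by omega,
      show x + y + w1 + w2 - 1 = x + y + b by omega,
      show x + w1 + w3 - 1 = x + a by omega,
      show y + w1 + w2 - 1 = y + b by omega,
      show x + w1 + w2 - 1 = x + b by omega,
      show y + w1 + w3 - 1 = y + a by omega]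
  rcases le_total b a with h | h
  · exact core a b x y h hx hy
  · have := core b a x y h hx hy
    omega
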